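/- arXiv:1903.04964 — 3 statements merged into one kernel-verified Lean document; each statement's English description precedes it below -/
import Mathlib

section
/- Let n ≥ 2 and ε₀ > 0 small enough. If E is a convex nearly spherical set parametrized by v with V(E) = V(B) and ‖v‖_{W^{1,∞}(S^{n-1})} ≤ ε₀, then ‖D_τ v‖²_{L^∞(S^{n-1})} ≤ 8 ‖v‖_{L^∞(S^{n-1})}. -/
open MeasureTheory Metric

/-- The unit sphere `S^{n-1}` in `ℝⁿ`. -/
def sphereS (n : ℕ) : Set (EuclideanSpace ℝ (Fin n)) := Metric.sphere 0 1

/-- The tangential gradient of a function on the sphere, computed as the gradient of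
its 0-homogeneous extension `x ↦ v(x/‖x‖)`. -/
noncomputable def tGrad (n : ℕ) (v : EuclideanSpace ℝ (Fin n) → ℝ)
    (x : EuclideanSpace ℝ (Fin n)) : EuclideanSpace ℝ (Fin n) :=
  gradient (fun y => v (‖y‖⁻¹ • y)) x

/-- The `W^{1,∞}(S^{n-1})` norm: supremum over the sphere of `max(|v|, |D_τ v|)`. -/
noncomputable def w1inf (n : ℕ) (v : EuclideanSpace ℝ (Fin n) → ℝ) : ℝ :=
  ⨆ x : sphereS n, max |v x.1| ‖tGrad n v x.1‖

/-- The nearly spherical set parametrized by `v`: the open star-shaped set whose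
boundary is `{x(1+v(x)) : x ∈ S^{n-1}}`. -/
def nsSet (n : ℕ) (v : EuclideanSpace ℝ (Fin n) → ℝ) :
    Set (EuclideanSpace ℝ (Fin n)) :=
  {y | y = 0 ∨ (y ≠ 0 ∧ ‖y‖ < 1 + v (‖y‖⁻¹ • y))}

/-- Membership of a function in `W^{1,∞}(S^{n-1})`, encoded as Lipschitz
continuity on the sphere. -/
def memW1inf (n : ℕ) (v : EuclideanSpace ℝ (Fin n) → ℝ) : Prop :=
  ∃ L : NNReal, LipschitzOnWith L v (sphereS n)

section Auxiliary

open RealInnerProductSpace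

lemma lim_aux {c p h : ℝ} (hc : 0 < c) (hh : 0 ≤ h)
    (H : ∀ s : ℝ, 0 < s → s < c → s * p ≤ h) : c * p ≤ h := by
  rcases le_or_gt p 0 with hp | hp
  · nlinarith
  · by_contra hlt
    push_neg at hlt
    have h1 : h / p < c := by rw [div_lt_iff₀ hp]; linarith [mul_comm c p]
    have h2 : 0 ≤ h / p := div_nonneg hh hp.le
    have h3 := H ((h / p + c) / 2) (by linarith) (by linarith)
    have h4 : h / p * p = h := div_mul_cancel₀ h hp.ne'
    nlinarith

lemma normalize_diff_le {X : Type*} [NormedAddCommGroup X] [NormedSpace ℝ X]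
    (y z : X) (hy : 1/2 < ‖y‖) (hz : 1/2 < ‖z‖) :
    ‖(‖y‖⁻¹ : ℝ) • y - (‖z‖⁻¹ : ℝ) • z‖ ≤ 4 * ‖y - z‖ := by
  have hy0 : (0:ℝ) < ‖y‖ := by linarith
  have hz0 : (0:ℝ) < ‖z‖ := by linarith
  have hdecomp : (‖y‖⁻¹ : ℝ) • y - (‖z‖⁻¹ : ℝ) • z
      = (‖y‖⁻¹ : ℝ) • (y - z) + ((‖y‖⁻¹ : ℝ) - (‖z‖⁻¹ : ℝ)) • z := by
    rw [smul_sub, sub_smul]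
    abel
  have h1 : ‖(‖y‖⁻¹ : ℝ) • (y - z)‖ = ‖y‖⁻¹ * ‖y - z‖ := by
    rw [norm_smul, Real.norm_eq_abs, abs_of_pos (by positivity)]
  have h2 : ‖((‖y‖⁻¹ : ℝ) - (‖z‖⁻¹ : ℝ)) • z‖ ≤ ‖y‖⁻¹ * ‖y - z‖ := by
    have e1 : (‖y‖⁻¹ : ℝ) - ‖z‖⁻¹ = (‖z‖ - ‖y‖) / (‖y‖ * ‖z‖) := by
      field_simp
    have e2 : |‖z‖ - ‖y‖| ≤ ‖y - z‖ := by
      have := abs_norm_sub_norm_le z y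
      rwa [norm_sub_rev] at this
    rw [norm_smul, Real.norm_eq_abs, e1, abs_div, abs_of_pos (mul_pos hy0 hz0)]
    have e3 : |‖z‖ - ‖y‖| / (‖y‖ * ‖z‖) * ‖z‖ = |‖z‖ - ‖y‖| / ‖y‖ := by
      field_simp
    rw [e3, inv_mul_eq_div]
    gcongr
  have h3 : ‖y‖⁻¹ ≤ 2 := by
    rw [inv_le_comm₀ hy0 (by norm_num)]
    linarith
  calc ‖(‖y‖⁻¹ : ℝ) • y - (‖z‖⁻¹ : ℝ) • z‖
      = ‖(‖y‖⁻¹ : ℝ) • (y - z) + ((‖y‖⁻¹ : ℝ) - (‖z‖⁻¹ : ℝ)) • z‖ := by rw [hdecomp]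
    _ ≤ ‖(‖y‖⁻¹ : ℝ) • (y - z)‖ + ‖((‖y‖⁻¹ : ℝ) - (‖z‖⁻¹ : ℝ)) • z‖ := norm_add_le _ _
    _ ≤ ‖y‖⁻¹ * ‖y - z‖ + ‖y‖⁻¹ * ‖y - z‖ := by rw [h1]; linarith [h2]
    _ ≤ 2 * ‖y - z‖ + 2 * ‖y - z‖ := by
        have := norm_nonneg (y - z)
        nlinarith
    _ = 4 * ‖y - z‖ := by ring

lemma tgrad_bound (n : ℕ) (v : EuclideanSpace ℝ (Fin n) → ℝ) (L : NNReal)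
    (hL : LipschitzOnWith L v (sphereS n)) (y : EuclideanSpace ℝ (Fin n)) (hy : ‖y‖ = 1) :
    ‖tGrad n v y‖ ≤ 4 * L := by
  set U : Set (EuclideanSpace ℝ (Fin n)) := {z | 1/2 < ‖z‖} with hUdef
  have hUopen : IsOpen U := isOpen_lt continuous_const continuous_norm
  have fLip : LipschitzOnWith (4 * L) (fun z : EuclideanSpace ℝ (Fin n) => v (‖z‖⁻¹ • z)) U := by
    apply LipschitzOnWith.of_dist_le_mul
    intro a ha b hb
    have ha' : 1/2 < ‖a‖ := ha
    have hb' : 1/2 < ‖b‖ := hb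
    have ha0 : a ≠ 0 := by intro h; rw [h, norm_zero] at ha'; norm_num at ha'
    have hb0 : b ≠ 0 := by intro h; rw [h, norm_zero] at hb'; norm_num at hb'
    have hamem : (‖a‖⁻¹ : ℝ) • a ∈ sphereS n := by
      rw [sphereS, mem_sphere_zero_iff_norm]
      exact norm_smul_inv_norm ha0
    have hbmem : (‖b‖⁻¹ : ℝ) • b ∈ sphereS n := by
      rw [sphereS, mem_sphere_zero_iff_norm]
      exact norm_smul_inv_norm hb0
    calc dist (v ((‖a‖⁻¹ : ℝ) • a)) (v ((‖b‖⁻¹ : ℝ) • b))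
        ≤ L * dist ((‖a‖⁻¹ : ℝ) • a) ((‖b‖⁻¹ : ℝ) • b) := hL.dist_le_mul _ hamem _ hbmem
      _ ≤ L * (4 * ‖a - b‖) := by
          apply mul_le_mul_of_nonneg_left _ L.coe_nonneg
          rw [dist_eq_norm]
          exact normalize_diff_le a b ha' hb'
      _ = (4 * L : NNReal) * dist a b := by
          rw [dist_eq_norm]
          push_cast
          ring
  have hUy : U ∈ nhds y := hUopen.mem_nhds (by rw [hUdef]; simp only [Set.mem_setOf_eq, hy]; norm_num)
  have hb := norm_fderiv_le_of_lipschitzOn ℝ hUy fLip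
  rw [tGrad, gradient]
  rw [LinearIsometryEquiv.norm_map]
  calc ‖fderiv ℝ (fun z : EuclideanSpace ℝ (Fin n) => v (‖z‖⁻¹ • z)) y‖
      ≤ ((4 * L : NNReal) : ℝ) := hb
    _ = 4 * L := by push_cast; ring

end Auxiliary

section Pointwise
open RealInnerProductSpace

lemma combine_arith {u β φg N G : ℝ} (E2 : G * β + u * φg = 0)
    (E1 : β * φg + u * (N ^ 2 - β ^ 2) = 0) :
    u ^ 2 * N ^ 2 = u ^ 2 * β ^ 2 + β ^ 2 * G := by
  linear_combination u * E1 - β * E2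

set_option maxHeartbeats 1000000 in
lemma final_arith {M u G N β : ℝ} (hM0 : 0 ≤ M) (hM1 : M ≤ 1/10)
    (hu1 : 1 - M ≤ u) (hu2 : u ≤ 1 + M) (hβ : 0 < β) (hN : 0 ≤ N) (hG : 0 ≤ G)
    (E4 : u ^ 2 * N ^ 2 = u ^ 2 * β ^ 2 + β ^ 2 * G)
    (E3 : (1 - M) * N ≤ u * β) : G ≤ 8 * M := by
  have hu : 0 < u := by linarith
  have E5 : (1 - M) ^ 2 * N ^ 2 ≤ u ^ 2 * β ^ 2 := by
    nlinarith [mul_self_le_mul_self (mul_nonneg (by linarith : (0:ℝ) ≤ 1 - M) hN) E3]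
  have hb2 : 0 < β ^ 2 := by positivity
  have E6 : (1 - M) ^ 2 * (u ^ 2 + G) ≤ u ^ 2 * u ^ 2 := by
    nlinarith [E4, E5, sq_nonneg u, hb2]
  have hB : (0:ℝ) < (1 - M) ^ 2 := by nlinarith
  have h1 : u ^ 2 ≤ (1 + M) ^ 2 := by nlinarith
  have h2 : (1 - M) ^ 2 ≤ u ^ 2 := by nlinarith
  have h7 : (1 - M) ^ 2 * G ≤ u ^ 2 * (u ^ 2 - (1 - M) ^ 2) := by nlinarith [E6]
  have hsub : u ^ 2 - (1 - M) ^ 2 ≤ 4 * M := by nlinarith [h1]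
  have hsub0 : (0:ℝ) ≤ u ^ 2 - (1 - M) ^ 2 := by nlinarith [h2]
  have h8 : u ^ 2 * (u ^ 2 - (1 - M) ^ 2) ≤ (1 + M) ^ 2 * (4 * M) :=
    mul_le_mul h1 hsub hsub0 (by positivity)
  have h9 : (1 + M) ^ 2 * (4 * M) ≤ 8 * M * (1 - M) ^ 2 := by nlinarith [hM0, hM1]
  nlinarith [h7, h8, h9, hB]


set_option maxHeartbeats 4000000 in
lemma pointwise_bound (n : ℕ) (v : EuclideanSpace ℝ (Fin n) → ℝ) (M : ℝ)
    (hM0 : 0 ≤ M) (hM1 : M ≤ 1/10)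
    (hv : ∀ y : EuclideanSpace ℝ (Fin n), ‖y‖ = 1 → |v y| ≤ M)
    (hconv : Convex ℝ (nsSet n v))
    (x : EuclideanSpace ℝ (Fin n)) (hx : ‖x‖ = 1) :
    ‖tGrad n v x‖ ^ 2 ≤ 8 * M := by
  -- positivity of radial function
  have upos : ∀ y : EuclideanSpace ℝ (Fin n), ‖y‖ = 1 → 0 < 1 + v y := by
    intro y hy
    have := abs_le.1 (hv y hy)
    linarith
  -- normalization of positive multiples
  have hnorm : ∀ (y : EuclideanSpace ℝ (Fin n)), ‖y‖ = 1 → ∀ s : ℝ, 0 < s → ‖s • y‖⁻¹ • (s • y) = y := by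
    intro y hy s hs
    have h1 : ‖s • y‖ = s := by
      rw [norm_smul, hy, Real.norm_eq_abs, abs_of_pos hs, mul_one]
    rw [h1, smul_smul, inv_mul_cancel₀ hs.ne', one_smul]
  have memE : ∀ (y : EuclideanSpace ℝ (Fin n)), ‖y‖ = 1 → ∀ s : ℝ, 0 < s → s < 1 + v y →
      s • y ∈ nsSet n v := by
    intro y hy s hs hs'
    have hy0 : y ≠ 0 := by intro h; rw [h, norm_zero] at hy; norm_num at hy
    refine Or.inr ⟨smul_ne_zero hs.ne' hy0, ?_⟩
    rw [hnorm y hy s hs, norm_smul, hy, Real.norm_eq_abs, abs_of_pos hs, mul_one]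
    exact hs'
  have ballE : ∀ a : EuclideanSpace ℝ (Fin n), ‖a‖ < 1 - M → a ∈ nsSet n v := by
    intro a ha
    rcases eq_or_ne a 0 with h0 | h0
    · exact Or.inl h0
    · refine Or.inr ⟨h0, ?_⟩
      have h1 : ‖(‖a‖⁻¹ : ℝ) • a‖ = 1 := norm_smul_inv_norm h0
      have h2 := abs_le.1 (hv _ h1)
      linarith
  have ballInt : Metric.ball (0 : EuclideanSpace ℝ (Fin n)) (1 - M) ⊆ interior (nsSet n v) := by
    apply interior_maximal _ Metric.isOpen_ball
    intro a ha
    rw [Metric.mem_ball, dist_zero_right] at ha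
    exact ballE a ha
  have zeroInt : (0 : EuclideanSpace ℝ (Fin n)) ∈ interior (nsSet n v) :=
    ballInt (Metric.mem_ball_self (by linarith))
  have intE : ∀ (y : EuclideanSpace ℝ (Fin n)), ‖y‖ = 1 → ∀ s : ℝ, 0 < s → s < 1 + v y →
      s • y ∈ interior (nsSet n v) := by
    intro y hy s hs hs'
    set s' : ℝ := (s + (1 + v y)) / 2 with hs'def
    have hs'1 : s < s' := by simp only [hs'def]; linarith
    have hs'2 : s' < 1 + v y := by simp only [hs'def]; linarith
    have hs'0 : 0 < s' := lt_trans hs hs'1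
    have hz : s' • y ∈ nsSet n v := memE y hy s' hs'0 hs'2
    have hcombo := hconv.combo_interior_self_mem_interior zeroInt hz
      (a := 1 - s / s') (b := s / s')
      (by rw [sub_pos, div_lt_one hs'0]; exact hs'1)
      (div_nonneg hs.le hs'0.le) (by ring)
    have : (1 - s / s') • (0 : EuclideanSpace ℝ (Fin n)) + (s / s') • (s' • y) = s • y := by
      rw [smul_zero, zero_add, smul_smul, div_mul_cancel₀ s hs'0.ne']
    rwa [this] at hcombo
  -- case: not differentiable
  by_cases hdiff : DifferentiableAt ℝ (fun y : EuclideanSpace ℝ (Fin n) => v (‖y‖⁻¹ • y)) x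
  swap
  · rw [tGrad, gradient_eq_zero_of_not_differentiableAt hdiff]
    simp only [norm_zero]
    nlinarith
  · set f : EuclideanSpace ℝ (Fin n) → ℝ := fun y => v (‖y‖⁻¹ • y) with hfdef
    have hfx : ∀ y : EuclideanSpace ℝ (Fin n), ‖y‖ = 1 → f y = v y := by
      intro y hy
      simp only [hfdef, hy, inv_one, one_smul]
    set D := fderiv ℝ f x with hDdef
    have hd : HasFDerivAt f D x := hdiff.hasFDerivAt
    set g := tGrad n v x with hgdef
    have hg_inner : ∀ w : EuclideanSpace ℝ (Fin n), ⟪g, w⟫ = D w := by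
      intro w
      rw [hgdef, tGrad, gradient]
      exact InnerProductSpace.toDual_symm_apply
    -- radial derivative is zero
    have hDx : D x = 0 := by
      have hr' : HasDerivAt (fun t : ℝ => (1 + t) • x) x 0 := by
        have h1 : HasDerivAt (fun t : ℝ => (1 + t)) 1 0 := by
          simpa using (hasDerivAt_id (0:ℝ)).const_add 1
        simpa using h1.smul_const x
      have hc0 : (1 + (0:ℝ)) • x = x := by norm_num
      have hcomp : HasDerivAt (fun t : ℝ => f ((1 + t) • x)) (D x) 0 := by
        have := (hc0 ▸ hd).comp_hasDerivAt 0 hr'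
        simpa [Function.comp_def] using this
      have heq : (fun t : ℝ => f ((1 + t) • x)) =ᶠ[nhds (0:ℝ)] fun _ => f x := by
        have hmem : Set.Ioi (-1 : ℝ) ∈ nhds (0:ℝ) := Ioi_mem_nhds (by norm_num)
        filter_upwards [hmem] with t ht
        have ht' : 0 < 1 + t := by have : (-1:ℝ) < t := ht; linarith
        have : f ((1 + t) • x) = v x := by
          rw [hfdef]
          simp only []
          rw [hnorm x hx (1+t) ht']
        rw [this, hfx x hx]
      have hconst : HasDerivAt (fun _ : ℝ => f x) (D x) 0 := heq.hasDerivAt_iff.mp hcomp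
      have := hconst.unique (hasDerivAt_const 0 (f x))
      exact this
    have hgx : ⟪g, x⟫ = 0 := by rw [hg_inner]; exact hDx
    -- the boundary point and separation
    set u : ℝ := 1 + v x with hudef
    have hu : 0 < u := upos x hx
    have huM := abs_le.1 (hv x hx)
    have hu1 : 1 - M ≤ u := by rw [hudef]; linarith [huM.1]
    have hu2 : u ≤ 1 + M := by rw [hudef]; linarith [huM.2]
    set A := u • x with hAdef
    have hAE : A ∉ nsSet n v := by
      intro hA
      have hnA : ‖A‖ = u := by
        rw [hAdef, norm_smul, hx, Real.norm_eq_abs, abs_of_pos hu, mul_one]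
      rcases hA with h0 | ⟨_, hlt⟩
      · rw [h0, norm_zero] at hnA; linarith
      · rw [hAdef, hnorm x hx u hu] at hlt
        rw [hAdef] at hnA
        rw [hnA] at hlt
        simp only [hudef] at hlt
        linarith
    obtain ⟨φ, hφ⟩ := geometric_hahn_banach_open_point (hconv.interior) isOpen_interior
      (fun hA' => hAE (interior_subset hA'))
    have hh0 : 0 < φ A := by
      have := hφ 0 zeroInt
      simpa using this
    have hφA : φ A = u * φ x := by rw [hAdef, φ.map_smul, smul_eq_mul]
    -- key global inequality on the sphere
    have key : ∀ y : EuclideanSpace ℝ (Fin n), ‖y‖ = 1 → (1 + v y) * φ y ≤ φ A := by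
      intro y hy
      apply lim_aux (upos y hy) hh0.le
      intro s hs hs'
      have h1 := hφ _ (intE y hy s hs hs')
      rw [φ.map_smul, smul_eq_mul] at h1
      exact h1.le
    -- first variation identity
    have eq1 : ∀ e : EuclideanSpace ℝ (Fin n), ‖e‖ = 1 → ⟪x, e⟫ = 0 →
        D e * φ x + u * φ e = 0 := by
      intro e he hxe
      set c : ℝ → EuclideanSpace ℝ (Fin n) :=
        fun θ => Real.cos θ • x + Real.sin θ • e with hcdef
      have hc0 : c 0 = x := by simp [hcdef]
      have hcu : ∀ θ, ‖c θ‖ = 1 := by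
        intro θ
        have hsq : ‖c θ‖ ^ 2 = 1 := by
          rw [hcdef]
          simp only []
          rw [norm_add_sq_real]
          rw [real_inner_smul_left, real_inner_smul_right, hxe]
          rw [norm_smul, norm_smul, hx, he]
          simp only [Real.norm_eq_abs, mul_one, mul_zero, add_zero, mul_pow, sq_abs]
          nlinarith [Real.sin_sq_add_cos_sq θ]
        have h0 : (0:ℝ) ≤ ‖c θ‖ := norm_nonneg _
        have h2 : (‖c θ‖ - 1) * (‖c θ‖ + 1) = 0 := by linear_combination hsq
        rcases mul_eq_zero.1 h2 with h3 | h3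
        · linarith
        · linarith
      have hc' : HasDerivAt c e 0 := by
        have h1 : HasDerivAt (fun θ : ℝ => Real.cos θ • x) ((-Real.sin 0) • x) 0 :=
          (Real.hasDerivAt_cos 0).smul_const x
        have h2 : HasDerivAt (fun θ : ℝ => Real.sin θ • e) (Real.cos 0 • e) 0 :=
          (Real.hasDerivAt_sin 0).smul_const e
        have := h1.add h2
        simpa [hcdef, Pi.add_def] using this
      have part1 : HasDerivAt (fun θ => f (c θ)) (D e) 0 := by
        have := (hc0 ▸ hd).comp_hasDerivAt 0 hc'
        simpa [Function.comp_def] using this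
      have part2 : HasDerivAt (fun θ => φ (c θ)) (φ e) 0 := by
        have := (φ.hasFDerivAt (x := c 0)).comp_hasDerivAt 0 hc'
        simpa [Function.comp_def] using this
      have hψd : HasDerivAt (fun θ => (1 + f (c θ)) * φ (c θ))
          ((0 + D e) * φ (c 0) + (1 + f (c 0)) * φ e) 0 :=
        ((hasDerivAt_const 0 (1:ℝ)).add part1).mul part2
      have hmax : IsLocalMax (fun θ => (1 + f (c θ)) * φ (c θ)) 0 := by
        apply Filter.Eventually.of_forall
        intro θ
        have h1 : (1 + f (c θ)) * φ (c θ) ≤ φ A := by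
          rw [hfx (c θ) (hcu θ)]
          exact key (c θ) (hcu θ)
        have h2 : (1 + f (c 0)) * φ (c 0) = φ A := by
          rw [hc0, hfx x hx, hφA, hudef]
        simp only []
        rw [h2]
        exact h1
      have hz := hmax.hasDerivAt_eq_zero hψd
      rw [hc0, hfx x hx] at hz
      rw [hudef]
      linarith [hz]
    -- final algebra
    rcases eq_or_ne g 0 with hg0 | hg0
    · rw [hg0]
      simp only [norm_zero]
      nlinarith
    · have hgn : (0:ℝ) < ‖g‖ := norm_pos_iff.mpr hg0
      set ν := (InnerProductSpace.toDual ℝ (EuclideanSpace ℝ (Fin n))).symm φ with hνdef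
      have hν : ∀ w : EuclideanSpace ℝ (Fin n), ⟪ν, w⟫ = φ w := by
        intro w; rw [hνdef]; exact InnerProductSpace.toDual_symm_apply
      -- (1-M) * ‖ν‖ ≤ φ A
      have hball : (1 - M) * ‖ν‖ ≤ φ A := by
        rcases eq_or_ne ν 0 with hν0 | hν0
        · rw [hν0, norm_zero, mul_zero]; exact hh0.le
        · have hνn : (0:ℝ) < ‖ν‖ := norm_pos_iff.mpr hν0
          apply lim_aux (by linarith : (0:ℝ) < 1 - M) hh0.le
          intro s hs hs'
          have hmem : (s * ‖ν‖⁻¹) • ν ∈ interior (nsSet n v) := by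
            apply ballInt
            rw [Metric.mem_ball, dist_zero_right, norm_smul, Real.norm_eq_abs,
              abs_of_pos (by positivity)]
            rw [mul_assoc, inv_mul_cancel₀ hνn.ne', mul_one]
            exact hs'
          have h1 := hφ _ hmem
          rw [φ.map_smul, smul_eq_mul] at h1
          have h2 : φ ν = ‖ν‖ ^ 2 := by rw [← hν ν, real_inner_self_eq_norm_sq]
          rw [h2] at h1
          have : s * ‖ν‖⁻¹ * ‖ν‖ ^ 2 = s * ‖ν‖ := by
            field_simp
          rw [this] at h1
          exact h1.le
      -- equation E2 with e = normalized g
      have hgx' : ⟪x, g⟫ = 0 := by rw [real_inner_comm]; exact hgx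
      have E2 : ‖g‖ ^ 2 * φ x + u * φ g = 0 := by
        have he : ‖(‖g‖⁻¹ : ℝ) • g‖ = 1 := norm_smul_inv_norm hg0
        have hxe : ⟪x, (‖g‖⁻¹ : ℝ) • g⟫ = 0 := by
          rw [real_inner_smul_right, hgx', mul_zero]
        have h1 := eq1 _ he hxe
        rw [φ.map_smul, smul_eq_mul] at h1
        have hDe : D ((‖g‖⁻¹ : ℝ) • g) = ‖g‖⁻¹ * ‖g‖ ^ 2 := by
          rw [← hg_inner, real_inner_smul_right, real_inner_self_eq_norm_sq]
        rw [hDe] at h1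
        have h2 := congrArg (fun t => ‖g‖ * t) h1
        simp only [mul_zero] at h2
        calc ‖g‖ ^ 2 * φ x + u * φ g
            = ‖g‖ * (‖g‖⁻¹ * ‖g‖ ^ 2 * φ x + u * (‖g‖⁻¹ * φ g)) := by
              field_simp <;> try ring
          _ = 0 := h2
      -- equation E1 with e = normalized tangential part of ν
      have hβ : 0 < φ x := by
        rw [hφA] at hh0
        nlinarith
      have hνx : ⟪ν, x⟫ = φ x := hν x
      have hνg : ⟪ν, g⟫ = φ g := hν g
      have E1 : φ x * φ g + u * (‖ν‖ ^ 2 - φ x ^ 2) = 0 := by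
        set ντ := ν - φ x • x with hντdef
        have hxντ : ⟪x, ντ⟫ = 0 := by
          rw [hντdef, inner_sub_right, real_inner_smul_right]
          rw [real_inner_self_eq_norm_sq, hx]
          rw [real_inner_comm, hνx]
          ring
        have hgντ : ⟪g, ντ⟫ = φ g := by
          rw [hντdef, inner_sub_right, real_inner_smul_right, hgx, mul_zero, sub_zero]
          rw [real_inner_comm, hνg]
        have hφντ : φ ντ = ‖ν‖ ^ 2 - φ x ^ 2 := by
          rw [hντdef, map_sub, φ.map_smul, smul_eq_mul]
          rw [← hν ν, real_inner_self_eq_norm_sq]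
          ring
        rcases eq_or_ne ντ 0 with hτ0 | hτ0
        · have h1 : φ g = 0 := by
            rw [← hgντ, hτ0, inner_zero_right]
          have h2 : ‖ν‖ ^ 2 - φ x ^ 2 = 0 := by
            rw [← hφντ, hτ0, map_zero]
          rw [h1, h2]
          ring
        · have hτn : (0:ℝ) < ‖ντ‖ := norm_pos_iff.mpr hτ0
          have he : ‖(‖ντ‖⁻¹ : ℝ) • ντ‖ = 1 := norm_smul_inv_norm hτ0
          have hxe : ⟪x, (‖ντ‖⁻¹ : ℝ) • ντ⟫ = 0 := by
            rw [real_inner_smul_right, hxντ, mul_zero]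
          have h1 := eq1 _ he hxe
          rw [φ.map_smul, smul_eq_mul] at h1
          have hDe : D ((‖ντ‖⁻¹ : ℝ) • ντ) = ‖ντ‖⁻¹ * φ g := by
            rw [← hg_inner, real_inner_smul_right, hgντ]
          rw [hDe] at h1
          have h2 := congrArg (fun t => ‖ντ‖ * t) h1
          simp only [mul_zero] at h2
          calc φ x * φ g + u * (‖ν‖ ^ 2 - φ x ^ 2)
              = φ x * φ g + u * φ ντ := by rw [hφντ]
            _ = ‖ντ‖ * (‖ντ‖⁻¹ * φ g * φ x + u * (‖ντ‖⁻¹ * φ ντ)) := by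
                field_simp <;> try ring
            _ = 0 := h2
      -- combine
      have hφA' : (1 - M) * ‖ν‖ ≤ u * φ x := by rwa [hφA] at hball
      have hνnn : (0:ℝ) ≤ ‖ν‖ := norm_nonneg _
      have hGnn : (0:ℝ) ≤ ‖g‖ ^ 2 := by positivity
      exact final_arith hM0 hM1 hu1 hu2 hβ hνnn (by positivity)
        (combine_arith E2 E1) hφA'

end Pointwise

/-- For convex nearly spherical sets with the volume of the unit ball and small
`W^{1,∞}` norm, `‖D_τ v‖²_{L^∞} ≤ 8 ‖v‖_{L^∞}`. -/
theorem stmt9 (n : ℕ) (hn : 2 ≤ n) :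
    ∃ ε₀ : ℝ, 0 < ε₀ ∧ ∀ v : EuclideanSpace ℝ (Fin n) → ℝ,
      memW1inf n v → Convex ℝ (nsSet n v) →
      volume (nsSet n v) = volume (ball (0 : EuclideanSpace ℝ (Fin n)) 1) →
      w1inf n v ≤ ε₀ →
      (⨆ x : sphereS n, ‖tGrad n v x.1‖) ^ 2 ≤ 8 * ⨆ x : sphereS n, |v x.1| := by
  refine ⟨1/10, by norm_num, ?_⟩
  intro v hW hconv _hvol hw
  obtain ⟨L, hL⟩ := hW
  have hn0 : 0 < n := by omega
  set x₀ : EuclideanSpace ℝ (Fin n) := EuclideanSpace.single (⟨0, hn0⟩ : Fin n) (1:ℝ) with hx₀def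
  have hx₀ : ‖x₀‖ = 1 := by rw [hx₀def, EuclideanSpace.norm_single]; norm_num
  have hx₀mem : x₀ ∈ sphereS n := by rw [sphereS, mem_sphere_zero_iff_norm]; exact hx₀
  haveI hne : Nonempty (sphereS n) := ⟨⟨x₀, hx₀mem⟩⟩
  have hsmem : ∀ x : sphereS n, ‖x.1‖ = 1 := fun x => mem_sphere_zero_iff_norm.mp x.2
  have hCv : ∀ x : sphereS n, |v x.1| ≤ |v x₀| + 2 * L := by
    intro x
    have hd := hL.dist_le_mul x.1 x.2 x₀ hx₀mem
    have hdist : dist x.1 x₀ ≤ 2 := by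
      calc dist x.1 x₀ ≤ ‖x.1‖ + ‖x₀‖ := by
            rw [dist_eq_norm]; exact norm_sub_le _ _
        _ = 2 := by rw [hsmem x, hx₀]; norm_num
    have h2 : dist (v x.1) (v x₀) ≤ L * 2 := hd.trans (by nlinarith [L.coe_nonneg])
    rw [Real.dist_eq] at h2
    calc |v x.1| = |(v x.1 - v x₀) + v x₀| := by congr 1; ring
      _ ≤ |v x.1 - v x₀| + |v x₀| := abs_add_le _ _
      _ ≤ |v x₀| + 2 * L := by linarith
  have htg : ∀ x : sphereS n, ‖tGrad n v x.1‖ ≤ 4 * L := fun x =>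
    tgrad_bound n v L hL x.1 (hsmem x)
  have bddV : BddAbove (Set.range fun x : sphereS n => |v x.1|) := by
    refine ⟨|v x₀| + 2 * L, ?_⟩
    rintro r ⟨x, rfl⟩
    exact hCv x
  have bddBig : BddAbove (Set.range fun x : sphereS n => max |v x.1| ‖tGrad n v x.1‖) := by
    refine ⟨max (|v x₀| + 2 * L) (4 * L), ?_⟩
    rintro r ⟨x, rfl⟩
    exact max_le_max (hCv x) (htg x)
  set M : ℝ := ⨆ x : sphereS n, |v x.1| with hMdef
  have hM0 : 0 ≤ M := Real.iSup_nonneg (fun x => abs_nonneg _)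
  have hMle : M ≤ w1inf n v := by
    rw [hMdef, w1inf]
    exact ciSup_mono bddBig (fun x => le_max_left _ _)
  have hM1 : M ≤ 1/10 := hMle.trans hw
  have hvM : ∀ y : EuclideanSpace ℝ (Fin n), ‖y‖ = 1 → |v y| ≤ M := by
    intro y hy
    have hymem : y ∈ sphereS n := by rw [sphereS, mem_sphere_zero_iff_norm]; exact hy
    exact le_ciSup bddV (⟨y, hymem⟩ : sphereS n)
  have hpt : ∀ x : sphereS n, ‖tGrad n v x.1‖ ≤ Real.sqrt (8 * M) := by
    intro x
    exact (Real.le_sqrt (norm_nonneg _) (by positivity)).mpr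
      (pointwise_bound n v M hM0 hM1 hvM hconv x.1 (hsmem x))
  have hS : (⨆ x : sphereS n, ‖tGrad n v x.1‖) ≤ Real.sqrt (8 * M) := ciSup_le hpt
  have hS0 : 0 ≤ ⨆ x : sphereS n, ‖tGrad n v x.1‖ := Real.iSup_nonneg (fun x => norm_nonneg _)
  calc (⨆ x : sphereS n, ‖tGrad n v x.1‖) ^ 2
      ≤ (Real.sqrt (8 * M)) ^ 2 := pow_le_pow_left₀ hS0 hS 2
    _ = 8 * M := Real.sq_sqrt (by positivity)
end

section
/- Let E ⊂ ℝ² be a bounded open strictly convex set containing the origin with C² support function h(θ) = P(E)/(2π) + p(θ), θ ∈ [0,2π], so that ∫₀^{2π} p dθ = 0 and P(E)/(2π) + p + p'' ≥ 0. If θ₀ maximizes p with p(θ₀) = ‖p‖_∞, then for all θ, p(θ) ≥ p(θ₀) − (1/2)(P(E)/(2π) + p(θ₀))(θ − θ₀)². -/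
open MeasureTheory intervalIntegral

/-- Parabola lower bound for the support-function perturbation of a planar convex
set: if `h(θ) = L/(2π) + p(θ)` is the support function (so `L/(2π) + p + p'' ≥ 0`,
`∫₀^{2π} p = 0`) and `θ₀` maximizes `p` with `p(θ₀) = ‖p‖_∞`, then
`p(θ) ≥ p(θ₀) - (1/2)(L/(2π) + p(θ₀))(θ - θ₀)²`. -/
theorem stmt13 (L : ℝ) (hL : 0 < L) (p : ℝ → ℝ) (hp : ContDiff ℝ 2 p)
    (hper : Function.Periodic p (2 * Real.pi))
    (hmean : (∫ θ in (0 : ℝ)..(2 * Real.pi), p θ) = 0)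
    (hconv : ∀ θ, 0 ≤ L / (2 * Real.pi) + p θ + deriv (deriv p) θ)
    (θ₀ : ℝ) (hmax : ∀ θ, p θ ≤ p θ₀) (habs : ∀ θ, |p θ| ≤ p θ₀) :
    ∀ θ : ℝ, p θ ≥ p θ₀ - (1 / 2) * (L / (2 * Real.pi) + p θ₀) * (θ - θ₀) ^ 2 := by
  set M : ℝ := L / (2 * Real.pi) + p θ₀ with hM
  have hdiff : Differentiable ℝ p := hp.differentiable (by norm_num)
  have hd1 : ContDiff ℝ 1 (deriv p) :=
    (contDiff_succ_iff_deriv.mp (show ContDiff ℝ (1 + 1) p from hp)).2.2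
  have hd1diff : Differentiable ℝ (deriv p) := hd1.differentiable (by norm_num)
  have hderiv0 : deriv p θ₀ = 0 := by
    have : IsLocalMax p θ₀ := Filter.Eventually.of_forall hmax
    exact this.deriv_eq_zero
  -- f' and its monotonicity
  set F : ℝ → ℝ := fun θ => deriv p θ + M * (θ - θ₀) with hF
  have hFdiff : Differentiable ℝ F := by
    apply hd1diff.add
    apply Differentiable.const_mul
    exact differentiable_id.sub_const θ₀
  have hFderiv : ∀ x, deriv F x = deriv (deriv p) x + M := by
    intro x
    rw [hF]
    rw [deriv_fun_add (hd1diff x) (by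
      exact ((differentiable_id.sub_const θ₀).const_mul M).differentiableAt)]
    congr 1
    have : HasDerivAt (fun θ : ℝ => M * (θ - θ₀)) M x := by
      simpa using ((hasDerivAt_id x).sub_const θ₀).const_mul M
    exact this.deriv
  have hFmono : Monotone F := by
    apply monotone_of_deriv_nonneg hFdiff
    intro x
    rw [hFderiv x]
    have h1 := hconv x
    have h2 := hmax x
    rw [hM]
    linarith
  have hF0 : F θ₀ = 0 := by simp [hF, hderiv0]
  -- the function f
  set f : ℝ → ℝ := fun θ => p θ - p θ₀ + (1 / 2) * M * (θ - θ₀) ^ 2 with hf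
  have hdf : ∀ x, HasDerivAt f (F x) x := by
    intro x
    have h1 : HasDerivAt (fun θ => p θ - p θ₀) (deriv p x) x :=
      (hdiff x).hasDerivAt.sub_const _
    have h2 : HasDerivAt (fun θ : ℝ => (1 / 2) * M * (θ - θ₀) ^ 2) (M * (x - θ₀)) x := by
      have h3 : HasDerivAt (fun θ : ℝ => (θ - θ₀) ^ 2) (2 * (x - θ₀)) x := by
        simpa using ((hasDerivAt_id x).sub_const θ₀).fun_pow 2
      have h4 := h3.const_mul ((1 : ℝ) / 2 * M)
      rw [show M * (x - θ₀) = 1 / 2 * M * (2 * (x - θ₀)) by ring]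
      exact h4
    exact h1.add h2
  have hf0 : f θ₀ = 0 := by simp [hf]
  have key : ∀ θ, 0 ≤ f θ := by
    intro θ
    rcases lt_trichotomy θ θ₀ with h | h | h
    · obtain ⟨c, hc, hceq⟩ := exists_hasDerivAt_eq_slope f F h
        (fun x _ => (hdf x).continuousAt.continuousWithinAt)
        (fun x _ => hdf x)
      have hFc : F c ≤ 0 := by
        have := hFmono (le_of_lt hc.2)
        rw [hF0] at this; exact this
      have hne : θ₀ - θ > 0 := by linarith
      have heq : F c * (θ₀ - θ) = f θ₀ - f θ := by
        field_simp at hceq; linarith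
      nlinarith [mul_nonneg (neg_nonneg.mpr hFc) (le_of_lt hne)]
    · subst h; rw [hf0]
    · obtain ⟨c, hc, hceq⟩ := exists_hasDerivAt_eq_slope f F h
        (fun x _ => (hdf x).continuousAt.continuousWithinAt)
        (fun x _ => hdf x)
      have hFc : 0 ≤ F c := by
        have := hFmono (le_of_lt hc.1)
        rw [hF0] at this; exact this
      have hne : θ - θ₀ > 0 := by linarith
      have heq : F c * (θ - θ₀) = f θ - f θ₀ := by
        field_simp at hceq; linarith
      nlinarith [mul_nonneg hFc (le_of_lt hne)]
  intro θ
  have := key θ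
  simp only [hf] at this
  linarith
end

section
/- Let E ⊂ ℝ² be a planar convex set with C² support function h(θ) = P(E)/(2π) + p(θ), ∫₀^{2π} p dθ = 0. Then π W(E) − P(E) V(E) = π ∫₀^{2π} p(θ)² ( P(E)/π + p(θ) + (1/2) p''(θ) ) dθ, and in particular π W(E) − P(E)V(E) ≥ (P(E)/2) ∫₀^{2π} p(θ)² dθ ≥ 0. -/
open MeasureTheory intervalIntegral

/-- Weinstock's identity and inequality in the plane: for a planar convex set with
`C²` support function `h(θ) = c + p(θ)` with `c = P(E)/(2π)`, `∫₀^{2π} p = 0`,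
`h + h'' ≥ 0` and `h ≥ 0`, with `V = (1/2)∫(h² + h h'')` and `W = ∫(h³ + ½h²h'')`,
one has `πW - P V = π ∫ p²(P/π + p + ½p'')` and `πW - P V ≥ (P/2)∫p² ≥ 0`. -/
theorem stmt15 (p : ℝ → ℝ) (hp : ContDiff ℝ 2 p)
    (hper : Function.Periodic p (2 * Real.pi))
    (hmean : (∫ θ in (0 : ℝ)..(2 * Real.pi), p θ) = 0)
    (c : ℝ) (hc : 0 < c)
    (hconvex : ∀ θ, 0 ≤ c + p θ + deriv (deriv p) θ)
    (hpos : ∀ θ, 0 ≤ c + p θ)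
    (V W : ℝ)
    (hV : V = (1 / 2) * ∫ θ in (0 : ℝ)..(2 * Real.pi),
      ((c + p θ) ^ 2 + (c + p θ) * deriv (deriv p) θ))
    (hW : W = ∫ θ in (0 : ℝ)..(2 * Real.pi),
      ((c + p θ) ^ 3 + (1 / 2) * (c + p θ) ^ 2 * deriv (deriv p) θ)) :
    (Real.pi * W - (2 * Real.pi * c) * V =
      Real.pi * ∫ θ in (0 : ℝ)..(2 * Real.pi),
        (p θ) ^ 2 * ((2 * Real.pi * c) / Real.pi + p θ + (1 / 2) * deriv (deriv p) θ)) ∧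
    Real.pi * W - (2 * Real.pi * c) * V ≥
      ((2 * Real.pi * c) / 2) * ∫ θ in (0 : ℝ)..(2 * Real.pi), (p θ) ^ 2 ∧
    (0 : ℝ) ≤ ((2 * Real.pi * c) / 2) * ∫ θ in (0 : ℝ)..(2 * Real.pi), (p θ) ^ 2 := by
  have pi_pos := Real.pi_pos
  have pi_ne : (Real.pi : ℝ) ≠ 0 := ne_of_gt pi_pos
  -- smoothness facts
  have hp1 : ContDiff ℝ 1 (deriv p) := by
    have h2 : ContDiff ℝ (1 + 1) p := by
      rw [show ((1 : WithTop ℕ∞) + 1) = 2 by norm_num]; exact hp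
    exact (contDiff_succ_iff_deriv.mp h2).2.2
  have cp : Continuous p := hp.continuous
  have cdp : Continuous (deriv p) := hp1.continuous
  have cddp : Continuous (deriv (deriv p)) :=
    (contDiff_one_iff_deriv.mp hp1).2
  -- integral of second derivative vanishes
  have hint2 : (∫ θ in (0 : ℝ)..(2 * Real.pi), deriv (deriv p) θ) = 0 := by
    rw [intervalIntegral.integral_deriv_eq_sub
      (fun x _ => (hp1.differentiable one_ne_zero).differentiableAt)
      (cddp.intervalIntegrable _ _)]
    have hfun : (fun x => p (x + 2 * Real.pi)) = p := funext hper
    have hper' : deriv p (2 * Real.pi) = deriv p 0 := by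
      have := deriv_comp_add_const p (2 * Real.pi) 0
      rw [hfun] at this
      simpa using this.symm
    rw [hper']; ring
  -- shorthands and integrability
  set g : ℝ → ℝ := fun θ => (p θ) ^ 2 * ((2 * Real.pi * c) / Real.pi + p θ + (1 / 2) * deriv (deriv p) θ) with hg
  set fV : ℝ → ℝ := fun θ => (c + p θ) ^ 2 + (c + p θ) * deriv (deriv p) θ with hfV
  set fW : ℝ → ℝ := fun θ => (c + p θ) ^ 3 + (1 / 2) * (c + p θ) ^ 2 * deriv (deriv p) θ with hfW
  have cg : Continuous g := by fun_prop
  have cfV : Continuous fV := by fun_prop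
  have cfW : Continuous fW := by fun_prop
  have ig : IntervalIntegrable g volume (0 : ℝ) (2 * Real.pi) := cg.intervalIntegrable _ _
  have ifV : IntervalIntegrable fV volume (0 : ℝ) (2 * Real.pi) := cfV.intervalIntegrable _ _
  have ifW : IntervalIntegrable fW volume (0 : ℝ) (2 * Real.pi) := cfW.intervalIntegrable _ _
  have ip : IntervalIntegrable p volume (0 : ℝ) (2 * Real.pi) := cp.intervalIntegrable _ _
  have iddp : IntervalIntegrable (deriv (deriv p)) volume (0 : ℝ) (2 * Real.pi) := cddp.intervalIntegrable _ _
  -- key pointwise identity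
  have hpoint : ∀ θ, fW θ = c * fV θ + g θ + (c ^ 2 * p θ - (c ^ 2 / 2) * deriv (deriv p) θ) := by
    intro θ
    simp only [hg, hfV, hfW]
    have h2c : (2 * Real.pi * c) / Real.pi = 2 * c := by field_simp
    rw [h2c]; ring
  have hkey : (∫ θ in (0 : ℝ)..(2 * Real.pi), fW θ)
      = c * (∫ θ in (0 : ℝ)..(2 * Real.pi), fV θ) + (∫ θ in (0 : ℝ)..(2 * Real.pi), g θ) := by
    have : (∫ θ in (0 : ℝ)..(2 * Real.pi), fW θ)
        = ∫ θ in (0 : ℝ)..(2 * Real.pi),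
            (c * fV θ + g θ + (c ^ 2 * p θ - (c ^ 2 / 2) * deriv (deriv p) θ)) := by
      apply intervalIntegral.integral_congr
      intro θ _; exact hpoint θ
    rw [this, intervalIntegral.integral_add (by exact (ifV.const_mul c).add ig)
        (by exact (ip.const_mul _).sub (iddp.const_mul _)),
      intervalIntegral.integral_add (ifV.const_mul c) ig,
      intervalIntegral.integral_sub (ip.const_mul _) (iddp.const_mul _),
      intervalIntegral.integral_const_mul, intervalIntegral.integral_const_mul,
      intervalIntegral.integral_const_mul, hmean, hint2]
    ring
  -- first conjunct
  have hmain : Real.pi * W - (2 * Real.pi * c) * V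
      = Real.pi * ∫ θ in (0 : ℝ)..(2 * Real.pi), g θ := by
    rw [hV, hW]
    show Real.pi * (∫ θ in (0 : ℝ)..(2 * Real.pi), fW θ)
        - (2 * Real.pi * c) * ((1 / 2) * ∫ θ in (0 : ℝ)..(2 * Real.pi), fV θ)
        = Real.pi * ∫ θ in (0 : ℝ)..(2 * Real.pi), g θ
    rw [hkey]; ring
  refine ⟨hmain, ?_, ?_⟩
  · -- inequality
    have hmono : (∫ θ in (0 : ℝ)..(2 * Real.pi), c * (p θ) ^ 2)
        ≤ ∫ θ in (0 : ℝ)..(2 * Real.pi), g θ := by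
      apply intervalIntegral.integral_mono_on (by positivity)
        ((continuous_const.mul (cp.pow 2)).intervalIntegrable _ _) ig
      intro θ _
      simp only [hg]
      have h2c : (2 * Real.pi * c) / Real.pi = 2 * c := by field_simp
      rw [h2c]
      have h1 := hconvex θ
      have h2 := hpos θ
      have hb : c ≤ 2 * c + p θ + (1 / 2) * deriv (deriv p) θ := by linarith
      have hsq : (0 : ℝ) ≤ (p θ) ^ 2 := sq_nonneg _
      show c * (p θ) ^ 2 ≤ p θ ^ 2 * (2 * c + p θ + 1 / 2 * deriv (deriv p) θ)
      nlinarith [mul_le_mul_of_nonneg_left hb hsq]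
    rw [hmain]
    rw [intervalIntegral.integral_const_mul] at hmono
    calc ((2 * Real.pi * c) / 2) * ∫ θ in (0 : ℝ)..(2 * Real.pi), (p θ) ^ 2
        = Real.pi * (c * ∫ θ in (0 : ℝ)..(2 * Real.pi), (p θ) ^ 2) := by ring
      _ ≤ Real.pi * ∫ θ in (0 : ℝ)..(2 * Real.pi), g θ := by
          exact mul_le_mul_of_nonneg_left hmono (le_of_lt pi_pos)
  · have h2 : (0 : ℝ) ≤ ∫ θ in (0 : ℝ)..(2 * Real.pi), (p θ) ^ 2 :=
      intervalIntegral.integral_nonneg (by positivity) (fun θ _ => sq_nonneg _)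
    positivity
end
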